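/- Let m ≥ 1 and s ≥ 0 be integers, let 1 ≤ k_1 < k_2 < ⋯ < k_s ≤ m+s be integers, and let q be a real number with 0 < q < 1. Let E := {2, 4, …, 2m+2s} and O := {1, 3, …, 2m+2s−1} be the sets of even and odd numbers in [2m+2s], and set C := E ∖ {2k_1, …, 2k_s} and D := O ∪ {2k_1, …, 2k_s}. Then ▲(C) · ▲(D) = ▲(E) · ▲(O) · ∏_{1≤i<j≤s} (q^{2k_j} − q^{2k_i})² · ∏_{i=1}^{s} q^{k_i} · (q−1) · (q³;q²)_{k_i−1} · (q;q²)_{m+s−k_i} / ((q²;q²)_{k_i−1} · (q²;q²)_{m+s−k_i}). -/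
import Mathlib


open scoped Classical

/-- The shifted q-factorial `(a;q)_k = (1-a)(1-aq)⋯(1-aq^{k-1})`. -/
noncomputable def qPoch (a q : ℝ) (k : ℕ) : ℝ := ∏ i ∈ Finset.range k, (1 - a * q ^ i)

/-- `▲(U) = ∏_{u < v in U} (q^v - q^u)`. -/
noncomputable def vand (q : ℝ) (U : Finset ℕ) : ℝ :=
  ∏ u ∈ U, ∏ v ∈ U.filter (fun v => u < v), (q ^ v - q ^ u)

section AuxTri
open Finset

noncomputable def gfac (q : ℝ) (a b : ℕ) : ℝ := if a < b then q^b - q^a else q^a - q^b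

lemma gfac_prod (q : ℝ) (A : Finset ℕ) (b : ℕ) (hb : b ∉ A) :
    ∏ a ∈ A, gfac q a b =
      (∏ a ∈ A.filter (fun a => a < b), (q^b - q^a)) *
      (∏ a ∈ A.filter (fun a => b < a), (q^a - q^b)) := by
  have hfil : A.filter (fun a => ¬ a < b) = A.filter (fun a => b < a) := by
    apply Finset.filter_congr
    intro a ha
    constructor
    · intro h; exact lt_of_le_of_ne (not_lt.mp h) (fun e => hb (e ▸ ha))
    · intro h; exact not_lt.mpr h.le
  rw [← Finset.prod_filter_mul_prod_filter_not A (fun a => a < b), hfil]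
  congr 1
  · exact Finset.prod_congr rfl (fun a ha => by
      simp only [Finset.mem_filter] at ha
      simp [gfac, ha.2])
  · exact Finset.prod_congr rfl (fun a ha => by
      simp only [Finset.mem_filter] at ha
      simp [gfac, not_lt.mpr ha.2.le])

lemma vand_union (q : ℝ) (A B : Finset ℕ) (hAB : Disjoint A B) :
    vand q (A ∪ B) = vand q A * vand q B * ∏ b ∈ B, ∏ a ∈ A, gfac q a b := by
  unfold vand
  rw [Finset.prod_union hAB]
  have hdisj : ∀ u : ℕ, Disjoint (A.filter (fun v => u < v)) (B.filter (fun v => u < v)) :=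
    fun u => Finset.disjoint_filter_filter hAB
  have h1 : ∀ C : Finset ℕ, (∏ u ∈ C, ∏ v ∈ (A ∪ B).filter (fun v => u < v), (q ^ v - q ^ u)) =
      (∏ u ∈ C, ∏ v ∈ A.filter (fun v => u < v), (q ^ v - q ^ u)) *
      (∏ u ∈ C, ∏ v ∈ B.filter (fun v => u < v), (q ^ v - q ^ u)) := by
    intro C
    rw [← Finset.prod_mul_distrib]
    refine Finset.prod_congr rfl fun u _ => ?_
    rw [Finset.filter_union, Finset.prod_union (hdisj u)]
  rw [h1 A, h1 B]
  have key : (∏ u ∈ A, ∏ v ∈ B.filter (fun v => u < v), (q ^ v - q ^ u)) *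
      (∏ u ∈ B, ∏ v ∈ A.filter (fun v => u < v), (q ^ v - q ^ u)) =
      ∏ b ∈ B, ∏ a ∈ A, gfac q a b := by
    have hswap : (∏ u ∈ A, ∏ v ∈ B.filter (fun v => u < v), (q ^ v - q ^ u)) =
        ∏ b ∈ B, ∏ a ∈ A.filter (fun a => a < b), (q ^ b - q ^ a) := by
      refine Finset.prod_comm' fun x y => ?_
      simp only [Finset.mem_filter]; tauto
    rw [hswap, ← Finset.prod_mul_distrib]
    refine Finset.prod_congr rfl fun b hb => ?_
    rw [gfac_prod q A b (Finset.disjoint_right.mp hAB hb)]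
  rw [← key]; ring

lemma sum_lin (n r : ℕ) (hr : 1 ≤ r) : ∑ t ∈ range n, (2*t+r) = n*(n+r-1) := by
  obtain ⟨r', rfl⟩ : ∃ r', r = r'+1 := ⟨r-1, by omega⟩
  have e : n + (r'+1) - 1 = n + r' := by omega
  rw [e]
  induction n with
  | zero => simp
  | succ c ih => rw [Finset.sum_range_succ, ih (by omega)]; ring

-- type A/C : ∏_{t<n} (q^{2n+2r-2} - q^{2t+r}) = (-1)^n q^{n(n+r-1)} ∏ (1-q^{2t+r})

lemma prodRefl (q : ℝ) (n r : ℕ) (hr : 1 ≤ r) :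
    ∏ t ∈ range n, (q^(2*n+2*r-2) - q^(2*t+r)) =
      (-1)^n * q^(n*(n+r-1)) * ∏ t ∈ range n, (1 - q^(2*t+r)) := by
  have step : ∀ t ∈ range n, (q^(2*n+2*r-2) - q^(2*t+r)) =
      ((-1) * q^(2*t+r)) * (1 - q^(2*(n-1-t)+r)) := by
    intro t ht
    rw [Finset.mem_range] at ht
    have he : 2*n+2*r-2 = (2*t+r) + (2*(n-1-t)+r) := by omega
    rw [he, pow_add]; ring
  rw [Finset.prod_congr rfl step, Finset.prod_mul_distrib, Finset.prod_mul_distrib,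
    Finset.prod_const, Finset.prod_pow_eq_pow_sum, Finset.prod_range_reflect (fun t => 1 - q^(2*t+r))]
  rw [Finset.card_range]
  congr 2
  rw [sum_lin n r hr]

-- type B/D : ∏_{t<n} (q^{2κ+2t+r} - q^{2κ}) = (-1)^n q^{2κn} ∏ (1-q^{2t+r})

lemma prodShift (q : ℝ) (n r c : ℕ) :
    ∏ t ∈ range n, (q^(2*c+(2*t+r)) - q^(2*c)) =
      (-1)^n * q^(2*c*n) * ∏ t ∈ range n, (1 - q^(2*t+r)) := by
  have step : ∀ t ∈ range n, (q^(2*c+(2*t+r)) - q^(2*c)) =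
      ((-1) * q^(2*c)) * (1 - q^(2*t+r)) := by
    intro t _
    rw [pow_add]; ring
  rw [Finset.prod_congr rfl step, Finset.prod_mul_distrib, Finset.prod_const, mul_pow,
    ← pow_mul, Finset.card_range]

lemma prodRefl1 (q : ℝ) (n : ℕ) :
    ∏ t ∈ range n, (q^(2*n) - q^(2*t+1)) = (-1)^n * q^(n*n) * ∏ t ∈ range n, (1 - q^(2*t+1)) := by
  have h := prodRefl q n 1 le_rfl
  have e1 : 2*n+2*1-2 = 2*n := by omega
  have e2 : n+1-1 = n := by omega
  rw [e1, e2] at h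
  exact h

lemma prodRefl2 (q : ℝ) (n : ℕ) :
    ∏ t ∈ range n, (q^(2*n+2) - q^(2*t+2)) = (-1)^n * q^(n*n+n) * ∏ t ∈ range n, (1 - q^(2*t+2)) := by
  have h := prodRefl q n 2 (by omega)
  have e1 : 2*n+2*2-2 = 2*n+2 := by omega
  have e2 : n+2-1 = n+1 := by omega
  rw [e1, e2, show n*(n+1) = n*n+n by ring] at h
  exact h

lemma qPoch_q (q : ℝ) (n : ℕ) : qPoch q (q^2) n = ∏ t ∈ range n, (1 - q^(2*t+1)) := by
  unfold qPoch
  exact Finset.prod_congr rfl fun t _ => by ring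

lemma qPoch_q2 (q : ℝ) (n : ℕ) : qPoch (q^2) (q^2) n = ∏ t ∈ range n, (1 - q^(2*t+2)) := by
  unfold qPoch
  exact Finset.prod_congr rfl fun t _ => by ring

lemma qPoch_q3 (q : ℝ) (n : ℕ) : qPoch (q^3) (q^2) n = ∏ t ∈ range n, (1 - q^(2*t+3)) := by
  unfold qPoch
  exact Finset.prod_congr rfl fun t _ => by ring

lemma po_succ (q : ℝ) (c : ℕ) :
    ∏ t ∈ range (c+1), (1 - q^(2*t+1)) = (1 - q) * ∏ t ∈ range c, (1 - q^(2*t+3)) := by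
  rw [Finset.prod_range_succ']
  have h1 : ∀ t ∈ range c, (1 - q^(2*(t+1)+1)) = (1 - q^(2*t+3)) := by
    intro t _
    have e : 2*(t+1)+1 = 2*t+3 := by omega
    rw [e]
  rw [Finset.prod_congr rfl h1]
  norm_num [mul_comm]

lemma perk (q : ℝ) (N κ : ℕ) (h1 : 1 ≤ κ) (h2 : κ ≤ N) :
    (∏ j ∈ Icc 1 N, gfac q (2*j-1) (2*κ)) *
      (qPoch (q^2) (q^2) (κ-1) * qPoch (q^2) (q^2) (N-κ)) =
    (∏ j ∈ (Icc 1 N).erase κ, gfac q (2*j) (2*κ)) *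
      (q^κ * (q-1) * qPoch (q^3) (q^2) (κ-1) * qPoch q (q^2) (N-κ)) := by
  obtain ⟨c, rfl⟩ : ∃ c, κ = c + 1 := ⟨κ - 1, by omega⟩
  obtain ⟨n, rfl⟩ : ∃ n, N = (c+1) + n := ⟨N - (c+1), by omega⟩
  have hc1 : c + 1 + n - (c+1) = n := by omega
  have hc2 : c + 1 - 1 = c := by omega
  rw [hc1, hc2]
  -- odd side split
  have hodd : (∏ j ∈ Icc 1 (c+1+n), gfac q (2*j-1) (2*(c+1))) =
      (∏ t ∈ range (c+1), (q^(2*(c+1)) - q^(2*t+1))) *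
      (∏ t ∈ range n, (q^(2*(c+1)+(2*t+1)) - q^(2*(c+1)))) := by
    rw [show Finset.Icc 1 (c+1+n) = Finset.Ioc 0 (c+1+n) from Finset.Icc_add_one_left_eq_Ioc 0 _,
      ← Finset.prod_Ioc_consecutive _ (Nat.zero_le (c+1)) (by omega : c+1 ≤ c+1+n)]
    congr 1
    · rw [show Finset.Ioc 0 (c+1) = Finset.Ico 1 (c+1+1) from rfl,
        Finset.prod_Ico_eq_prod_range]
      refine Finset.prod_congr (by congr 1 <;> omega) fun t ht => ?_
      rw [Finset.mem_range] at ht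
      have e1 : 2*(1+t)-1 = 2*t+1 := by omega
      rw [e1, gfac, if_pos (by omega)]
    · rw [show Finset.Ioc (c+1) (c+1+n) = Finset.Ico (c+2) (c+1+n+1) by ext x; simp [Nat.lt_succ_iff]; omega,
        Finset.prod_Ico_eq_prod_range]
      refine Finset.prod_congr (by congr 1 <;> omega) fun t ht => ?_
      rw [Finset.mem_range] at ht
      have e1 : 2*(c+2+t)-1 = 2*(c+1)+(2*t+1) := by omega
      rw [e1, gfac, if_neg (by omega)]
  -- even side split
  have herase : (Finset.Icc 1 (c+1+n)).erase (c+1) =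
      Finset.Icc 1 c ∪ Finset.Icc (c+2) (c+1+n) := by
    ext x
    simp only [Finset.mem_erase, Finset.mem_Icc, Finset.mem_union]
    omega
  have hdisj : Disjoint (Finset.Icc 1 c) (Finset.Icc (c+2) (c+1+n)) := by
    rw [Finset.disjoint_left]
    intro x hx hx'
    simp only [Finset.mem_Icc] at hx hx'
    omega
  have heven : (∏ j ∈ (Icc 1 (c+1+n)).erase (c+1), gfac q (2*j) (2*(c+1))) =
      (∏ t ∈ range c, (q^(2*c+2) - q^(2*t+2))) *
      (∏ t ∈ range n, (q^(2*(c+1)+(2*t+2)) - q^(2*(c+1)))) := by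
    rw [herase, Finset.prod_union hdisj]
    congr 1
    · rw [show Finset.Icc 1 c = Finset.Ico 1 (c+1) from rfl, Finset.prod_Ico_eq_prod_range]
      refine Finset.prod_congr (by congr 1 <;> omega) fun t ht => ?_
      rw [Finset.mem_range] at ht
      have e1 : 2*(1+t) = 2*t+2 := by omega
      have e2 : 2*(c+1) = 2*c+2 := by omega
      rw [e1, e2, gfac, if_pos (by omega)]
    · rw [show Finset.Icc (c+2) (c+1+n) = Finset.Ico (c+2) (c+1+n+1) by ext x; simp [Nat.lt_succ_iff],
        Finset.prod_Ico_eq_prod_range]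
      refine Finset.prod_congr (by congr 1 <;> omega) fun t ht => ?_
      rw [Finset.mem_range] at ht
      have e1 : 2*(c+2+t) = 2*(c+1)+(2*t+2) := by omega
      rw [e1, gfac, if_neg (by omega)]
  rw [hodd, heven, prodRefl1 q (c+1), prodRefl2 q c,
    prodShift q n 1 (c+1), prodShift q n 2 (c+1),
    qPoch_q, qPoch_q2, qPoch_q2, qPoch_q3, po_succ]
  ring

end AuxTri

theorem triangle_product_even_case (m s : ℕ) (hm : 1 ≤ m)
    (k : ℕ → ℕ)
    (hk : ∀ i ∈ Finset.Icc 1 s, 1 ≤ k i ∧ k i ≤ m + s)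
    (hkmono : ∀ i ∈ Finset.Icc 1 s, ∀ j ∈ Finset.Icc 1 s, i < j → k i < k j)
    (q : ℝ) (hq0 : 0 < q) (hq1 : q < 1) :
    vand q (((Finset.Icc 1 (m + s)).image (fun i => 2 * i)) \
        ((Finset.Icc 1 s).image (fun i => 2 * k i))) *
      vand q (((Finset.Icc 1 (m + s)).image (fun i => 2 * i - 1)) ∪
        ((Finset.Icc 1 s).image (fun i => 2 * k i)))
      = vand q ((Finset.Icc 1 (m + s)).image (fun i => 2 * i)) *
        vand q ((Finset.Icc 1 (m + s)).image (fun i => 2 * i - 1)) *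
        (∏ i ∈ Finset.Icc 1 s, ∏ j ∈ (Finset.Icc 1 s).filter (fun j => i < j),
          (q ^ (2 * k j) - q ^ (2 * k i)) ^ 2) *
        ∏ i ∈ Finset.Icc 1 s,
          q ^ (k i) * (q - 1) * qPoch (q ^ 3) (q ^ 2) (k i - 1) *
            qPoch q (q ^ 2) (m + s - k i) /
            (qPoch (q ^ 2) (q ^ 2) (k i - 1) * qPoch (q ^ 2) (q ^ 2) (m + s - k i)) := by
  set E := (Finset.Icc 1 (m+s)).image (fun i => 2 * i) with hEdef
  set O := (Finset.Icc 1 (m+s)).image (fun i => 2 * i - 1) with hOdef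
  set K := (Finset.Icc 1 s).image (fun i => 2 * k i) with hKdef
  -- injectivity facts
  have hkinj : ∀ i ∈ Finset.Icc 1 s, ∀ j ∈ Finset.Icc 1 s, 2 * k i = 2 * k j → i = j := by
    intro i hi j hj h
    by_contra hne
    rcases lt_or_gt_of_ne hne with h' | h'
    · have := hkmono i hi j hj h'; omega
    · have := hkmono j hj i hi h'; omega
  have hOinj : ∀ i ∈ Finset.Icc 1 (m+s), ∀ j ∈ Finset.Icc 1 (m+s), 2*i-1 = 2*j-1 → i = j := by
    intro i hi j hj h
    simp only [Finset.mem_Icc] at hi hj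
    omega
  have hKE : K ⊆ E := by
    intro x hx
    rw [hKdef, Finset.mem_image] at hx
    obtain ⟨i, hi, rfl⟩ := hx
    have := hk i hi
    rw [hEdef, Finset.mem_image]
    exact ⟨k i, Finset.mem_Icc.mpr ⟨this.1, this.2⟩, rfl⟩
  have hOK : Disjoint O K := by
    rw [Finset.disjoint_left]
    intro x hx hx'
    rw [hOdef, Finset.mem_image] at hx
    rw [hKdef, Finset.mem_image] at hx'
    obtain ⟨i, hi, rfl⟩ := hx
    obtain ⟨j, hj, hj'⟩ := hx'
    rw [Finset.mem_Icc] at hi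
    omega
  -- positivity of denominators
  have hqp : ∀ j : ℕ, 0 < qPoch (q^2) (q^2) j := by
    intro j
    refine Finset.prod_pos fun t _ => ?_
    have e : q^2 * (q^2)^t = q^(2+2*t) := by ring
    rw [e, sub_pos]
    exact pow_lt_one₀ hq0.le hq1 (by omega)
  have hPD : (∏ i ∈ Finset.Icc 1 s,
      (qPoch (q ^ 2) (q ^ 2) (k i - 1) * qPoch (q ^ 2) (q ^ 2) (m + s - k i))) ≠ 0 :=
    ne_of_gt (Finset.prod_pos fun i _ => mul_pos (hqp _) (hqp _))
  rw [Finset.prod_div_distrib, mul_div_assoc', eq_div_iff hPD]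
  -- expand vand of unions
  have hD : vand q (O ∪ K) = vand q O * vand q K * ∏ b ∈ K, ∏ a ∈ O, gfac q a b :=
    vand_union q O K hOK
  have hE : vand q E = vand q (E \ K) * vand q K * ∏ b ∈ K, ∏ a ∈ E \ K, gfac q a b := by
    conv_lhs => rw [← Finset.sdiff_union_of_subset hKE]
    exact vand_union q (E \ K) K Finset.sdiff_disjoint
  rw [hD, hE]
  -- the key cross identity
  have main : (∏ b ∈ K, ∏ a ∈ O, gfac q a b) *
      (∏ i ∈ Finset.Icc 1 s, (qPoch (q ^ 2) (q ^ 2) (k i - 1) * qPoch (q ^ 2) (q ^ 2) (m + s - k i))) =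
      (∏ b ∈ K, ∏ a ∈ E \ K, gfac q a b) *
      (∏ i ∈ Finset.Icc 1 s, ∏ j ∈ (Finset.Icc 1 s).filter (fun j => i < j),
          (q ^ (2 * k j) - q ^ (2 * k i)) ^ 2) *
      (∏ i ∈ Finset.Icc 1 s, (q ^ (k i) * (q - 1) * qPoch (q ^ 3) (q ^ 2) (k i - 1) *
            qPoch q (q ^ 2) (m + s - k i))) := by
    have hEinj : Function.Injective (fun i : ℕ => 2 * i) := fun a b h => by
      simp only [] at h; omega
    -- reindex the odd cross product
    have c1 : (∏ b ∈ K, ∏ a ∈ O, gfac q a b) =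
        ∏ i ∈ Finset.Icc 1 s, ∏ j ∈ Finset.Icc 1 (m+s), gfac q (2*j-1) (2*k i) := by
      rw [hKdef, Finset.prod_image hkinj]
      exact Finset.prod_congr rfl fun i hi => by rw [hOdef, Finset.prod_image hOinj]
    -- per-i decomposition of the even side
    have c2 : ∀ i ∈ Finset.Icc 1 s,
        (∏ j ∈ (Finset.Icc 1 (m+s)).erase (k i), gfac q (2*j) (2*k i)) =
        (∏ a ∈ E \ K, gfac q a (2*k i)) *
        (∏ j ∈ (Finset.Icc 1 s).erase i, gfac q (2*k j) (2*k i)) := by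
      intro i hi
      have h2ki : 2 * k i ∈ K := by
        rw [hKdef, Finset.mem_image]; exact ⟨i, hi, rfl⟩
      have himg : E.erase (2*k i) = ((Finset.Icc 1 (m+s)).erase (k i)).image (fun j => 2*j) := by
        rw [hEdef, Finset.image_erase hEinj]
      have hsplitE : E.erase (2*k i) = (E \ K) ∪ (K.erase (2*k i)) := by
        ext a
        simp only [Finset.mem_erase, Finset.mem_sdiff, Finset.mem_union]
        constructor
        · rintro ⟨hne, haE⟩
          by_cases haK : a ∈ K
          · exact Or.inr ⟨hne, haK⟩
          · exact Or.inl ⟨haE, haK⟩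
        · rintro (⟨haE, haK⟩ | ⟨hne, haK⟩)
          · exact ⟨fun e => haK (e ▸ h2ki), haE⟩
          · exact ⟨hne, hKE haK⟩
      have hdisjE : Disjoint (E \ K) (K.erase (2*k i)) := by
        rw [Finset.disjoint_left]
        intro a ha ha'
        exact (Finset.mem_sdiff.mp ha).2 (Finset.mem_of_mem_erase ha')
      have hKer : K.erase (2*k i) = ((Finset.Icc 1 s).erase i).image (fun j => 2*k j) := by
        ext a
        simp only [Finset.mem_erase, hKdef, Finset.mem_image]
        constructor
        · rintro ⟨hne, j, hj, rfl⟩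
          exact ⟨j, ⟨fun e => hne (e ▸ rfl), hj⟩, rfl⟩
        · rintro ⟨j, ⟨hji, hj⟩, rfl⟩
          exact ⟨fun e => hji (hkinj j hj i hi e), j, hj, rfl⟩
      have e1 : (∏ j ∈ (Finset.Icc 1 (m+s)).erase (k i), gfac q (2*j) (2*k i)) =
          ∏ a ∈ E.erase (2*k i), gfac q a (2*k i) := by
        rw [himg, Finset.prod_image (fun x _ y _ h => hEinj h)]
      rw [e1, hsplitE, Finset.prod_union hdisjE, hKer,
        Finset.prod_image (fun x hx y hy h =>
          hkinj x (Finset.mem_of_mem_erase hx) y (Finset.mem_of_mem_erase hy) h)]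
    -- the square identity
    have hSQ : (∏ i ∈ Finset.Icc 1 s, ∏ j ∈ (Finset.Icc 1 s).erase i, gfac q (2*k j) (2*k i))
        = ∏ i ∈ Finset.Icc 1 s, ∏ j ∈ (Finset.Icc 1 s).filter (fun j => i < j),
            (q ^ (2 * k j) - q ^ (2 * k i)) ^ 2 := by
      have hsplit : ∀ i : ℕ, (Finset.Icc 1 s).erase i =
          (Finset.Icc 1 s).filter (fun j => i < j) ∪ (Finset.Icc 1 s).filter (fun j => j < i) := by
        intro i; ext x
        simp only [Finset.mem_erase, Finset.mem_Icc, Finset.mem_union, Finset.mem_filter]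
        omega
      have hdisj2 : ∀ i : ℕ, Disjoint ((Finset.Icc 1 s).filter (fun j => i < j))
          ((Finset.Icc 1 s).filter (fun j => j < i)) := by
        intro i
        rw [Finset.disjoint_left]
        intro x hx hx'
        simp only [Finset.mem_filter] at hx hx'
        omega
      have step1 : (∏ i ∈ Finset.Icc 1 s, ∏ j ∈ (Finset.Icc 1 s).erase i, gfac q (2*k j) (2*k i))
          = (∏ i ∈ Finset.Icc 1 s, ∏ j ∈ (Finset.Icc 1 s).filter (fun j => i < j),
              gfac q (2*k j) (2*k i)) *
            (∏ i ∈ Finset.Icc 1 s, ∏ j ∈ (Finset.Icc 1 s).filter (fun j => j < i),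
              gfac q (2*k j) (2*k i)) := by
        rw [← Finset.prod_mul_distrib]
        exact Finset.prod_congr rfl fun i _ => by rw [hsplit i, Finset.prod_union (hdisj2 i)]
      have step2 : (∏ i ∈ Finset.Icc 1 s, ∏ j ∈ (Finset.Icc 1 s).filter (fun j => i < j),
              gfac q (2*k j) (2*k i))
          = ∏ i ∈ Finset.Icc 1 s, ∏ j ∈ (Finset.Icc 1 s).filter (fun j => i < j),
              (q ^ (2 * k j) - q ^ (2 * k i)) := by
        refine Finset.prod_congr rfl fun i hi => Finset.prod_congr rfl fun j hj => ?_
        rw [Finset.mem_filter] at hj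
        have := hkmono i hi j hj.1 hj.2
        rw [gfac, if_neg (by omega)]
      have step3 : (∏ i ∈ Finset.Icc 1 s, ∏ j ∈ (Finset.Icc 1 s).filter (fun j => j < i),
              gfac q (2*k j) (2*k i))
          = ∏ i ∈ Finset.Icc 1 s, ∏ j ∈ (Finset.Icc 1 s).filter (fun j => i < j),
              (q ^ (2 * k j) - q ^ (2 * k i)) := by
        rw [Finset.prod_comm' (t' := Finset.Icc 1 s)
          (s' := fun y => (Finset.Icc 1 s).filter (fun x => y < x)) (fun x y => by
          simp only [Finset.mem_filter]; tauto)]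
        refine Finset.prod_congr rfl fun i hi => Finset.prod_congr rfl fun j hj => ?_
        rw [Finset.mem_filter] at hj
        have := hkmono i hi j hj.1 hj.2
        rw [gfac, if_pos (by omega)]
      rw [step1, step2, step3, ← Finset.prod_mul_distrib]
      exact Finset.prod_congr rfl fun i _ => by
        rw [← Finset.prod_mul_distrib]
        exact Finset.prod_congr rfl fun j _ => (sq _).symm
    -- assemble
    rw [c1, ← Finset.prod_mul_distrib,
      Finset.prod_congr rfl (fun i hi => perk q (m+s) (k i) (hk i hi).1 (hk i hi).2),
      Finset.prod_mul_distrib, Finset.prod_congr rfl c2, Finset.prod_mul_distrib, hSQ]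
    rw [hKdef, Finset.prod_image hkinj]
  linear_combination (vand q (E \ K) * vand q O * vand q K) * main
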